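/- Let A be a unital C*-algebra and a_1, ..., a_n ∈ A. Then the following are equivalent: (1) there exist c_1, ..., c_n ∈ A such that c_1a_1 + ... + c_na_n is invertible; (2) there exist c_1, ..., c_n ∈ A such that c_1a_1 + ... + c_na_n = 1; (3) a_1*a_1 + a_2*a_2 + ... + a_n*a_n is invertible. -/

import Mathlib

/-- In a unital C*-algebra, for a₁, …, aₙ the following are equivalent:
(1) some left combination ∑ cᵢ aᵢ is invertible, (2) some left combination equals 1,
(3) ∑ aᵢ* aᵢ is invertible. -/
theorem stmt_0 {A : Type*} [CStarAlgebra A] (n : ℕ) (a : Fin n → A) :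
    ((∃ c : Fin n → A, IsUnit (∑ i, c i * a i)) ↔ (∃ c : Fin n → A, ∑ i, c i * a i = 1)) ∧
    ((∃ c : Fin n → A, ∑ i, c i * a i = 1) ↔ IsUnit (∑ i, star (a i) * a i)) := by
  letI := CStarAlgebra.spectralOrder A
  haveI := CStarAlgebra.spectralOrderedRing A
  have h23 : (∃ c : Fin n → A, ∑ i, c i * a i = 1) ↔ IsUnit (∑ i, star (a i) * a i) := by
    constructor
    · rintro ⟨c, hc⟩
      set b : A := ∑ i, star (a i) * a i with hb
      set s : A := ∑ i, c i * star (c i) with hs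
      have hs_sa : IsSelfAdjoint s := by
        refine isSelfAdjoint_iff.mpr ?_
        rw [hs, star_sum]
        exact Finset.sum_congr rfl fun i _ => by rw [star_mul, star_star]
      set K : ℝ := ‖s‖ + 1 with hK
      have hKpos : (0 : ℝ) < K := by positivity
      set t : ℝ := K⁻¹ with ht
      have htpos : (0 : ℝ) < t := by positivity
      have hsle : s ≤ algebraMap ℝ A K := by
        refine le_trans hs_sa.le_algebraMap_norm_self ?_
        rw [← sub_nonneg, ← map_sub]
        have h1 : K - ‖s‖ = 1 := by rw [hK]; ring
        rw [h1, map_one]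
        exact zero_le_one
      -- the key positivity computation
      have h2 : (0 : A) ≤ ∑ i, star (a i - t • star (c i)) * (a i - t • star (c i)) :=
        Finset.sum_nonneg fun i _ => star_mul_self_nonneg _
      have expand : ∑ i, star (a i - t • star (c i)) * (a i - t • star (c i))
          = b - (2 * t) • (1 : A) + (t * t) • s := by
        have h1 : ∀ i ∈ Finset.univ, star (a i - t • star (c i)) * (a i - t • star (c i))
            = star (a i) * a i - t • star (c i * a i) - t • (c i * a i)
              + (t * t) • (c i * star (c i)) := by
          intro i _
          simp only [star_sub, star_smul, star_star, star_trivial, sub_mul, mul_sub,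
            smul_mul_assoc, mul_smul_comm, smul_smul, smul_sub, smul_add, star_mul]
          module
        rw [Finset.sum_congr rfl h1]
        simp only [Finset.sum_add_distrib, Finset.sum_sub_distrib, ← Finset.smul_sum,
          ← star_sum, hc, hb, hs, star_one]
        module
      have h7 : (0 : A) ≤ b - (2 * t) • (1 : A) + (t * t) • s := expand ▸ h2
      have h5 : (t * t) • s ≤ t • (1 : A) := by
        have h6 : (t * t) • (algebraMap ℝ A K) = t • (1 : A) := by
          rw [Algebra.algebraMap_eq_smul_one, smul_smul]
          congr 1
          rw [ht]
          field_simp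
        calc (t * t) • s ≤ (t * t) • (algebraMap ℝ A K) :=
              smul_le_smul_of_nonneg_left hsle (by positivity)
          _ = t • (1 : A) := h6
      have key : t • (1 : A) ≤ b := by
        rw [← sub_nonneg]
        have h8 : (0 : A) ≤ t • (1 : A) - (t * t) • s := sub_nonneg.mpr h5
        calc (0 : A) ≤ (b - (2 * t) • (1 : A) + (t * t) • s) + (t • (1 : A) - (t * t) • s) :=
              add_nonneg h7 h8
          _ = b - t • (1 : A) := by module
      refine CStarAlgebra.isUnit_of_le _ key (IsUnit.isStrictlyPositive ?_ ?_)
      · have : IsUnit (algebraMap ℝ A t) :=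
          (isUnit_iff_ne_zero.mpr htpos.ne').map (algebraMap ℝ A)
        rwa [Algebra.algebraMap_eq_smul_one] at this
      · exact smul_nonneg htpos.le zero_le_one
    · rintro ⟨u, hu⟩
      refine ⟨fun i => (↑u⁻¹ : A) * star (a i), ?_⟩
      calc ∑ i, ((↑u⁻¹ : A) * star (a i)) * a i
          = (↑u⁻¹ : A) * ∑ i, star (a i) * a i := by
            rw [Finset.mul_sum]; exact Finset.sum_congr rfl fun i _ => by rw [mul_assoc]
        _ = (↑u⁻¹ : A) * (↑u : A) := by rw [hu]
        _ = 1 := u.inv_mul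
  refine ⟨?_, h23⟩
  constructor
  · rintro ⟨c, hc⟩
    obtain ⟨u, hu⟩ := hc
    refine ⟨fun i => (↑u⁻¹ : A) * c i, ?_⟩
    calc ∑ i, ((↑u⁻¹ : A) * c i) * a i
        = (↑u⁻¹ : A) * ∑ i, c i * a i := by
          rw [Finset.mul_sum]; exact Finset.sum_congr rfl fun i _ => by rw [mul_assoc]
      _ = (↑u⁻¹ : A) * (↑u : A) := by rw [hu]
      _ = 1 := u.inv_mul
  · rintro ⟨c, hc⟩
    exact ⟨c, hc ▸ isUnit_one⟩
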